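/- Let BC be the bicyclic monoid and ωₙ the weight with ωₙ(e) = 1 and ωₙ(s) = n for s ≠ e. Then the Banach algebra Aₙ = (ℓ¹(BC, ωₙ), ∗) is Dedekind-infinite: h = δ_q ∗ δ_p is an idempotent with h ∼ δ_e and h ≠ δ_e. Moreover every idempotent h ∈ Aₙ with h ∼ δ_e and h ≠ δ_e satisfies ‖h‖_{ωₙ} ≥ n/2. -/

import Mathlib

/-- The defining relation of the bicyclic monoid `BC = ⟨p, q : pq = e⟩`. -/
def bicyclicRel : FreeMonoid (Fin 2) → FreeMonoid (Fin 2) → Prop :=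
  fun x y => x = FreeMonoid.of 0 * FreeMonoid.of 1 ∧ y = 1

/-- The bicyclic monoid. -/
def BC := PresentedMonoid bicyclicRel

instance : Monoid BC := by unfold BC; infer_instance

/-- The generator `p` of `BC`. -/
def BC.p : BC := PresentedMonoid.of bicyclicRel 0

/-- The generator `q` of `BC`. -/
def BC.q : BC := PresentedMonoid.of bicyclicRel 1

open Classical in
/-- The point mass `δ_x`. -/
noncomputable def delta (x : BC) : BC → ℂ := fun s => if s = x then 1 else 0

/-- The convolution product on `ℓ¹(BC)`. -/
noncomputable def conv (f g : BC → ℂ) : BC → ℂ :=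
  fun r => ∑' x : {x : BC × BC // x.1 * x.2 = r}, f x.1.1 * g x.1.2

/-- Membership in `ℓ¹(BC, ω)`. -/
def MemL1 (ω : BC → ℝ) (f : BC → ℂ) : Prop := Summable fun s => ‖f s‖ * ω s

/-- The weighted `ℓ¹` norm. -/
noncomputable def wnorm (ω : BC → ℝ) (f : BC → ℂ) : ℝ := ∑' s, ‖f s‖ * ω s

-- BC monoid facts
lemma BC.pq_eq_one : BC.p * BC.q = 1 := by
  show PresentedMonoid.mk bicyclicRel (FreeMonoid.of 0) *
      PresentedMonoid.mk bicyclicRel (FreeMonoid.of 1) = 1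
  rw [← map_mul]
  exact Quotient.sound (ConGen.Rel.of _ _ ⟨rfl, rfl⟩)

def bcEnd : Fin 2 → Function.End ℕ := ![fun k => k - 1, fun k => k + 1]

lemma bcEnd_pres : ∀ a b : FreeMonoid (Fin 2), bicyclicRel a b →
    FreeMonoid.lift bcEnd a = FreeMonoid.lift bcEnd b := by
  rintro a b ⟨rfl, rfl⟩
  rw [map_mul, map_one, FreeMonoid.lift_eval_of, FreeMonoid.lift_eval_of]
  funext k
  show (bcEnd 0) ((bcEnd 1) k) = k
  simp [bcEnd]

lemma BC.qp_ne_one : BC.q * BC.p ≠ 1 := by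
  intro hc
  have h1 := congrArg (PresentedMonoid.lift bcEnd bcEnd_pres) hc
  erw [map_mul, map_one] at h1
  have h2 := congrFun h1 0
  have : ((PresentedMonoid.lift bcEnd bcEnd_pres) BC.q *
      (PresentedMonoid.lift bcEnd bcEnd_pres) BC.p) 0
      = (bcEnd 1) ((bcEnd 0) 0) := rfl
  rw [this] at h2
  simp [bcEnd] at h2
  exact one_ne_zero (h2.trans rfl)

-- the equivalence between the sigma of fibers and BC × BC
def convEquiv : (Σ r : BC, {x : BC × BC // x.1 * x.2 = r}) ≃ BC × BC where
  toFun z := z.2.1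
  invFun x := ⟨x.1 * x.2, x, rfl⟩
  left_inv := by rintro ⟨r, x, rfl⟩; rfl
  right_inv x := rfl

section analytic

variable {f g : BC → ℂ}

lemma summable_sigma_mul (hf : Summable fun s => ‖f s‖) (hg : Summable fun s => ‖g s‖) :
    Summable ((fun z : BC × BC => f z.1 * g z.2) ∘ convEquiv) :=
  convEquiv.summable_iff.mpr ((hf.mul_norm hg).of_norm)

lemma summable_sigma_mul_norm (hf : Summable fun s => ‖f s‖) (hg : Summable fun s => ‖g s‖) :
    Summable ((fun z : BC × BC => ‖f z.1 * g z.2‖) ∘ convEquiv) :=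
  convEquiv.summable_iff.mpr (hf.mul_norm hg)

/-- fiberwise summability of the products -/
lemma summable_fiber (hf : Summable fun s => ‖f s‖) (hg : Summable fun s => ‖g s‖) (r : BC) :
    Summable (fun x : {x : BC × BC // x.1 * x.2 = r} => f x.1.1 * g x.1.2) :=
  (summable_sigma_mul hf hg).sigma_factor r

lemma summable_fiber_norm (hf : Summable fun s => ‖f s‖) (hg : Summable fun s => ‖g s‖) (r : BC) :
    Summable (fun x : {x : BC × BC // x.1 * x.2 = r} => ‖f x.1.1 * g x.1.2‖) :=
  (summable_sigma_mul_norm hf hg).sigma_factor r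

/-- the augmentation character is multiplicative -/
lemma tsum_conv (hf : Summable fun s => ‖f s‖) (hg : Summable fun s => ‖g s‖) :
    ∑' r, conv f g r = (∑' s, f s) * (∑' s, g s) :=
  calc ∑' r, conv f g r
      = ∑' z : (Σ r : BC, {x : BC × BC // x.1 * x.2 = r}),
        f (convEquiv z).1 * g (convEquiv z).2 := (Summable.tsum_sigma (summable_sigma_mul hf hg)).symm
    _ = ∑' z : BC × BC, f z.1 * g z.2 := convEquiv.tsum_eq (fun z : BC × BC => f z.1 * g z.2)
    _ = (∑' s, f s) * (∑' s, g s) := (tsum_mul_tsum_of_summable_norm hf hg).symm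

/-- submultiplicativity of the ℓ¹-norm -/
lemma conv_norm (hf : Summable fun s => ‖f s‖) (hg : Summable fun s => ‖g s‖) :
    Summable (fun r => ‖conv f g r‖) ∧
    ∑' r, ‖conv f g r‖ ≤ (∑' s, ‖f s‖) * (∑' s, ‖g s‖) := by
  have hbound : ∀ r, ‖conv f g r‖ ≤
      ∑' x : {x : BC × BC // x.1 * x.2 = r}, ‖f x.1.1 * g x.1.2‖ :=
    fun r => norm_tsum_le_tsum_norm (summable_fiber_norm hf hg r)
  have hsum2 : Summable fun r => ∑' x : {x : BC × BC // x.1 * x.2 = r}, ‖f x.1.1 * g x.1.2‖ :=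
    (summable_sigma_mul_norm hf hg).sigma
  have h1 : Summable fun r => ‖conv f g r‖ :=
    hsum2.of_nonneg_of_le (fun r => norm_nonneg _) hbound
  refine ⟨h1, ?_⟩
  have h2 : ∑' r, ∑' x : {x : BC × BC // x.1 * x.2 = r}, ‖f x.1.1 * g x.1.2‖
      = (∑' s, ‖f s‖) * (∑' s, ‖g s‖) :=
    calc ∑' r, ∑' x : {x : BC × BC // x.1 * x.2 = r}, ‖f x.1.1 * g x.1.2‖
        = ∑' z : (Σ r : BC, {x : BC × BC // x.1 * x.2 = r}),
          ‖f (convEquiv z).1 * g (convEquiv z).2‖ :=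
          (Summable.tsum_sigma (summable_sigma_mul_norm hf hg)).symm
      _ = ∑' z : BC × BC, ‖f z.1 * g z.2‖ :=
          convEquiv.tsum_eq (fun z : BC × BC => ‖f z.1 * g z.2‖)
      _ = ∑' z : BC × BC, ‖f z.1‖ * ‖g z.2‖ := tsum_congr fun z => norm_mul _ _
      _ = ∑' x : BC, ∑' y : BC, ‖f x‖ * ‖g y‖ :=
          Summable.tsum_prod ((hf.mul_norm hg).congr fun z => (norm_mul _ _))
      _ = ∑' x : BC, ‖f x‖ * ∑' s, ‖g s‖ := tsum_congr fun x => tsum_mul_left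
      _ = (∑' s, ‖f s‖) * (∑' s, ‖g s‖) := tsum_mul_right
  calc ∑' r, ‖conv f g r‖
      ≤ ∑' r, ∑' x : {x : BC × BC // x.1 * x.2 = r}, ‖f x.1.1 * g x.1.2‖ :=
        Summable.tsum_le_tsum hbound h1 hsum2
    _ = (∑' s, ‖f s‖) * (∑' s, ‖g s‖) := h2

end analytic

lemma conv_delta_delta (x y : BC) : conv (delta x) (delta y) = delta (x * y) := by
  classical
  funext r
  show (∑' z : {z : BC × BC // z.1 * z.2 = r}, delta x z.1.1 * delta y z.1.2)
      = delta (x * y) r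
  by_cases hr : x * y = r
  · subst hr
    rw [tsum_eq_single (⟨(x, y), rfl⟩ : {z : BC × BC // z.1 * z.2 = x * y})]
    · simp [delta]
    · rintro ⟨⟨u, v⟩, hb2⟩ hb
      by_cases hu : u = x
      · by_cases hv : v = y
        · exact absurd (Subtype.ext (by simp [hu, hv] : ((u, v) : BC × BC) = (x, y))) hb
        · simp [delta, hv]
      · simp [delta, hu]
  · rw [delta, if_neg (fun hc => hr hc.symm)]
    have hz : ∀ z : {z : BC × BC // z.1 * z.2 = r}, delta x z.1.1 * delta y z.1.2 = 0 := by
      rintro ⟨⟨u, v⟩, hb2⟩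
      by_cases hu : u = x
      · by_cases hv : v = y
        · exact absurd (by rw [← hb2, hu, hv]) hr
        · simp [delta, hv]
      · simp [delta, hu]
    rw [tsum_congr hz, tsum_zero]

lemma conv_delta_one_right (f : BC → ℂ) : conv f (delta 1) = f := by
  funext r
  show (∑' z : {z : BC × BC // z.1 * z.2 = r}, f z.1.1 * delta 1 z.1.2) = f r
  rw [tsum_eq_single (⟨(r, 1), mul_one r⟩ : {z : BC × BC // z.1 * z.2 = r})]
  · simp [delta]
  · rintro ⟨⟨u, v⟩, hb2⟩ hb
    by_cases hv : v = 1
    · refine absurd (Subtype.ext ?_) hb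
      subst hv; rw [mul_one] at hb2; simpa using hb2
    · simp [delta, hv]

lemma conv_delta_one_left (f : BC → ℂ) : conv (delta 1) f = f := by
  funext r
  show (∑' z : {z : BC × BC // z.1 * z.2 = r}, delta 1 z.1.1 * f z.1.2) = f r
  rw [tsum_eq_single (⟨(1, r), one_mul r⟩ : {z : BC × BC // z.1 * z.2 = r})]
  · simp [delta]
  · rintro ⟨⟨u, v⟩, hb2⟩ hb
    by_cases hu : u = 1
    · refine absurd (Subtype.ext ?_) hb
      subst hu; rw [one_mul] at hb2; simpa using hb2
    · simp [delta, hu]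

lemma delta_norm_summable (x : BC) : Summable fun s => ‖delta x s‖ := by
  classical
  apply summable_of_ne_finset_zero (s := ({x} : Finset BC))
  intro s hs
  rw [delta, if_neg (by simpa using hs), norm_zero]

lemma conv_sub_delta (h : BC → ℂ) (hhs : Summable fun s => ‖h s‖)
    (hidem : conv h h = h) :
    conv (fun s => h s - delta 1 s) (fun s => h s - delta 1 s)
      = fun s => delta 1 s - h s := by
  funext r
  have hδ : Summable fun s => ‖delta 1 s‖ := delta_norm_summable 1
  have S1 : Summable (fun x : {x : BC × BC // x.1 * x.2 = r} => h x.1.1 * h x.1.2) :=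
    summable_fiber hhs hhs r
  have S2 : Summable (fun x : {x : BC × BC // x.1 * x.2 = r} => h x.1.1 * delta 1 x.1.2) :=
    summable_fiber hhs hδ r
  have S3 : Summable (fun x : {x : BC × BC // x.1 * x.2 = r} => delta 1 x.1.1 * h x.1.2) :=
    summable_fiber hδ hhs r
  have S4 : Summable
      (fun x : {x : BC × BC // x.1 * x.2 = r} => delta 1 x.1.1 * delta 1 x.1.2) :=
    summable_fiber hδ hδ r
  have key : (∑' x : {x : BC × BC // x.1 * x.2 = r},
      (h x.1.1 - delta 1 x.1.1) * (h x.1.2 - delta 1 x.1.2))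
      = conv h h r - conv h (delta 1) r - (conv (delta 1) h r - conv (delta 1) (delta 1) r) := by
    have expand : ∀ x : {x : BC × BC // x.1 * x.2 = r},
        (h x.1.1 - delta 1 x.1.1) * (h x.1.2 - delta 1 x.1.2)
        = (h x.1.1 * h x.1.2 - h x.1.1 * delta 1 x.1.2)
          - (delta 1 x.1.1 * h x.1.2 - delta 1 x.1.1 * delta 1 x.1.2) := fun x => by ring
    rw [tsum_congr expand, Summable.tsum_sub (S1.sub S2) (S3.sub S4), Summable.tsum_sub S1 S2, Summable.tsum_sub S3 S4]
    rfl
  show (∑' x : {x : BC × BC // x.1 * x.2 = r},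
      (h x.1.1 - delta 1 x.1.1) * (h x.1.2 - delta 1 x.1.2)) = delta 1 r - h r
  rw [key, hidem, conv_delta_one_right h, conv_delta_one_left h,
    conv_delta_one_right (delta 1)]
  ring

lemma memL1_delta (ω : BC → ℝ) (x : BC) : MemL1 ω (delta x) := by
  classical
  apply summable_of_ne_finset_zero (s := ({x} : Finset BC))
  intro s hs
  rw [delta, if_neg (by simpa using hs), norm_zero, zero_mul]

lemma tsum_delta_one : ∑' s, delta 1 s = 1 := by
  rw [tsum_eq_single (1 : BC) (fun b hb => by rw [delta, if_neg hb])]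
  rw [delta, if_pos rfl]

/-- For the weight `ωₙ` on `BC` with `ωₙ(e) = 1` and `ωₙ(s) = n` otherwise, the
algebra `ℓ¹(BC, ωₙ)` is Dedekind-infinite, witnessed by the idempotent
`h = δ_q ∗ δ_p ∼ δ_e`, `h ≠ δ_e`; and every idempotent `h ∼ δ_e`, `h ≠ δ_e`
satisfies `‖h‖_{ωₙ} ≥ n/2`. -/
theorem bicyclic_weighted_l1_dedekind_infinite
    (n : ℕ) (hn : 1 ≤ n) (ω : BC → ℝ)
    (hωe : ω 1 = 1) (hωs : ∀ s : BC, s ≠ 1 → ω s = n) :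
    conv (delta BC.q) (delta BC.p) = delta (BC.q * BC.p) ∧
    conv (delta (BC.q * BC.p)) (delta (BC.q * BC.p)) = delta (BC.q * BC.p) ∧
    delta (BC.q * BC.p) ≠ delta 1 ∧
    (∃ a b : BC → ℂ, MemL1 ω a ∧ MemL1 ω b ∧
      conv a b = delta 1 ∧ conv b a = delta (BC.q * BC.p)) ∧
    (∀ h : BC → ℂ, MemL1 ω h → conv h h = h → h ≠ delta 1 →
      (∃ a b : BC → ℂ, MemL1 ω a ∧ MemL1 ω b ∧
        conv a b = delta 1 ∧ conv b a = h) →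
      (n : ℝ) / 2 ≤ wnorm ω h) := by
  classical
  have hqp_sq : (BC.q * BC.p) * (BC.q * BC.p) = BC.q * BC.p := by
    rw [mul_assoc, ← mul_assoc BC.p, BC.pq_eq_one, one_mul]
  have hω1 : ∀ s, (1 : ℝ) ≤ ω s := by
    intro s
    by_cases hs : s = 1
    · rw [hs, hωe]
    · rw [hωs s hs]; exact_mod_cast hn
  refine ⟨conv_delta_delta _ _, ?_, ?_, ?_, ?_⟩
  · rw [conv_delta_delta, hqp_sq]
  · intro hc
    have h1 := congrFun hc 1
    rw [delta, delta, if_pos rfl, if_neg (fun hx => BC.qp_ne_one hx.symm)] at h1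
    exact zero_ne_one h1
  · exact ⟨delta BC.p, delta BC.q, memL1_delta ω _, memL1_delta ω _,
      by rw [conv_delta_delta, BC.pq_eq_one], conv_delta_delta _ _⟩
  rintro h hmem hidem hne ⟨a, b, ha, hb, hab, hba⟩
  -- basic summabilities
  have habs : ∀ {f : BC → ℂ}, MemL1 ω f → Summable fun s => ‖f s‖ := by
    intro f hf
    exact hf.of_nonneg_of_le (fun s => norm_nonneg _)
      (fun s => le_mul_of_one_le_right (norm_nonneg _) (hω1 s))
  have hhs : Summable fun s => ‖h s‖ := habs hmem
  have has : Summable fun s => ‖a s‖ := habs ha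
  have hbs : Summable fun s => ‖b s‖ := habs hb
  -- the augmentation character
  have hφab : (∑' s, a s) * (∑' s, b s) = 1 := by
    rw [← tsum_conv has hbs, hab, tsum_delta_one]
  have hφh : ∑' s, h s = 1 := by
    rw [← hba, tsum_conv hbs has, mul_comm, hφab]
  -- the tail mass T
  set T : ℝ := ∑' s, if s = 1 then 0 else ‖h s‖ with hTdef
  have hTs : Summable fun s : BC => if s = 1 then 0 else ‖h s‖ := by
    refine hhs.of_nonneg_of_le (fun s => ?_) (fun s => ?_)
    · split <;> [rfl; exact norm_nonneg _]
    · split <;> [exact norm_nonneg _; rfl]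
  -- |1 - h 1| ≤ T
  have hα : ‖(1 : ℂ) - h 1‖ ≤ T := by
    have hsplit := Summable.tsum_eq_add_tsum_ite hhs.of_norm (1 : BC)
    rw [hφh] at hsplit
    have h1 : (1 : ℂ) - h 1 = ∑' s, ite (s = 1) 0 (h s) := by
      rw [hsplit]; ring
    have hsn : Summable fun s : BC => ‖ite (s = 1) (0 : ℂ) (h s)‖ := by
      refine hTs.congr fun s => ?_
      split <;> simp
    rw [h1]
    refine (norm_tsum_le_tsum_norm hsn).trans_eq (tsum_congr fun s => ?_)
    split <;> simp
  -- the function g = h - δ₁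
  set g : BC → ℂ := fun s => h s - delta 1 s with hgdef
  have hgs : Summable fun s => ‖g s‖ := by
    refine (hhs.add (delta_norm_summable 1)).of_nonneg_of_le
      (fun s => norm_nonneg _) (fun s => norm_sub_le _ _)
  have hconvgg : conv g g = fun s => delta 1 s - h s := conv_sub_delta h hhs hidem
  set N : ℝ := ∑' s, ‖g s‖ with hNdef
  -- 1 ≤ N
  have hN1 : 1 ≤ N := by
    have hNN : N ≤ N * N := by
      have hcn := (conv_norm hgs hgs).2
      have heq : ∑' r, ‖conv g g r‖ = N := by
        rw [hconvgg]
        refine tsum_congr fun s => ?_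
        show ‖delta 1 s - h s‖ = ‖g s‖
        rw [show delta 1 s - h s = -(g s) by rw [hgdef]; ring, norm_neg]
      rw [heq] at hcn
      exact hcn
    have hNpos : 0 < N := by
      obtain ⟨s0, hs0⟩ := Function.ne_iff.mp hne
      have hg0 : 0 < ‖g s0‖ := by
        rw [norm_pos_iff]
        exact sub_ne_zero.mpr hs0
      exact hg0.trans_le (Summable.le_tsum hgs s0 fun j _ => norm_nonneg _)
    nlinarith
  -- N = ‖g 1‖ + T
  have hNeq : N = ‖g 1‖ + T := by
    rw [hNdef, Summable.tsum_eq_add_tsum_ite hgs (1 : BC)]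
    congr 1
    refine tsum_congr fun s => ?_
    by_cases hs : s = 1
    · simp [hs]
    · rw [if_neg hs, if_neg hs, hgdef]
      simp [delta, hs]
  have hg1 : ‖g 1‖ ≤ T := by
    have : g 1 = -((1 : ℂ) - h 1) := by
      rw [hgdef]; simp [delta]
    rw [this, norm_neg]
    exact hα
  have hT : (1 : ℝ) / 2 ≤ T := by linarith [hNeq ▸ hN1]
  -- conclude
  have hwn : wnorm ω h = ‖h 1‖ * ω 1 + ∑' s, ite (s = 1) 0 (‖h s‖ * ω s) :=
    Summable.tsum_eq_add_tsum_ite hmem (1 : BC)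
  have htail : ∑' s, ite (s = 1) (0 : ℝ) (‖h s‖ * ω s) = n * T := by
    rw [hTdef, ← tsum_mul_left]
    refine tsum_congr fun s => ?_
    by_cases hs : s = 1
    · simp [hs]
    · rw [if_neg hs, if_neg hs, hωs s hs]; ring
  have hTnn : (0:ℝ) ≤ ‖h 1‖ * ω 1 := mul_nonneg (norm_nonneg _) ((zero_le_one).trans (hω1 1))
  rw [hwn, htail]
  have hn' : (0:ℝ) ≤ (n:ℝ) := Nat.cast_nonneg n
  nlinarith
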